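/- Restricted q-Leibniz formula: let k be a field of characteristic 0, A an associative k-algebra, a, b in A, q in k, and ζ in k a root of unity of multiplicative order exactly r. Then [a, b^r]_{q^r} = [⋯[[a,b]_q, b]_{qζ} ⋯, b]_{qζ^{r-1}}, the iterated q-commutator with r occurrences of b. -/

import Mathlib

open Polynomial Finset
open scoped Classical

/-- The `q`-commutator `[a,b]_q := a*b - q • (b*a)`. -/
def qComm {k A : Type*} [Field k] [Ring A] [Algebra k A] (q : k) (a b : A) : A :=
  a * b - q • (b * a)

/-- The iterated `q`-commutator `[⋯[[a,b]_q, b]_{qζ} ⋯, b]_{qζ^{m-1}}`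
with `m` occurrences of `b`. -/
def qCommIterRight {k A : Type*} [Field k] [Ring A] [Algebra k A]
    (q ζ : k) (a b : A) : ℕ → A
  | 0 => a
  | m + 1 => qComm (q * ζ ^ m) (qCommIterRight q ζ a b m) b

lemma prodA_aux {k : Type*} [Field k] {ζ : k} {r : ℕ} (hr : 0 < r) (h : IsPrimitiveRoot ζ r)
    (x : k) : ∏ j ∈ Finset.range r, (x - ζ ^ j) = x ^ r - 1 := by
  haveI : NeZero r := ⟨hr.ne'⟩
  have himg : nthRootsFinset r (1 : k) = (Finset.range r).image (ζ ^ ·) := by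
    ext z
    simp only [Polynomial.mem_nthRootsFinset hr (1 : k), Finset.mem_image, Finset.mem_range]
    constructor
    · intro hz
      obtain ⟨i, hi, rfl⟩ := h.eq_pow_of_pow_eq_one hz
      exact ⟨i, hi, rfl⟩
    · rintro ⟨i, hi, rfl⟩
      rw [← pow_mul, mul_comm, pow_mul, h.pow_eq_one, one_pow]
  have hpoly := X_pow_sub_one_eq_prod hr h
  rw [himg, Finset.prod_image
    (fun i hi j hj hij => h.injOn_pow (by simpa using hi) (by simpa using hj) hij)] at hpoly
  have := congrArg (Polynomial.eval x) hpoly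
  simpa [Polynomial.eval_prod] using this.symm

lemma prodB_aux {k : Type*} [Field k] {ζ : k} {r : ℕ} (hr : 0 < r) (h : IsPrimitiveRoot ζ r)
    (y : k) : ∏ j ∈ Finset.range r, (1 - y * ζ ^ j) = 1 - y ^ r := by
  rcases eq_or_ne y 0 with rfl | hy
  · simp [hr.ne']
  · have step : ∀ j ∈ Finset.range r, (1 - y * ζ ^ j) = y * (y⁻¹ - ζ ^ j) := by
      intro j _
      field_simp
    rw [Finset.prod_congr rfl step, Finset.prod_mul_distrib, Finset.prod_const,
      prodA_aux hr h, Finset.card_range, mul_sub, mul_one, ← mul_pow,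
      mul_inv_cancel₀ hy, one_pow]

lemma prodC_aux {k : Type*} [Field k] [CharZero k] {ζ : k} {r : ℕ} (hr : 0 < r)
    (h : IsPrimitiveRoot ζ r) (q : k) :
    ∏ j ∈ Finset.range r, (1 - Polynomial.C (q * ζ ^ j) * Polynomial.X) =
      1 - Polynomial.C (q ^ r) * Polynomial.X ^ r := by
  apply Polynomial.funext
  intro x
  have := prodB_aux hr h (q * x)
  simpa [Polynomial.eval_prod, mul_pow, mul_comm, mul_assoc, mul_left_comm] using this

lemma qCommIterRight_expand {k A : Type*} [Field k] [Ring A] [Algebra k A]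
    (a b : A) (q ζ : k) (m : ℕ) :
    qCommIterRight q ζ a b m =
      ∑ i ∈ Finset.range (m + 1),
        ((∏ j ∈ Finset.range m, (1 - Polynomial.C (q * ζ ^ j) * Polynomial.X)).coeff i) •
          (b ^ i * a * b ^ (m - i)) := by
  induction m with
  | zero => simp [qCommIterRight]
  | succ m ih =>
    set P : Polynomial k := ∏ j ∈ Finset.range m, (1 - Polynomial.C (q * ζ ^ j) * Polynomial.X)
      with hP
    have hPm1 : ∏ j ∈ Finset.range (m + 1),
        (1 - Polynomial.C (q * ζ ^ j) * Polynomial.X)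
        = P - Polynomial.C (q * ζ ^ m) * (P * Polynomial.X) := by
      rw [Finset.prod_range_succ, ← hP]; ring
    have hdeg : P.natDegree ≤ m := by
      refine le_trans (Polynomial.natDegree_prod_le _ _) ?_
      refine le_trans (Finset.sum_le_card_nsmul _ _ 1 ?_) (by simp)
      intro j _
      refine le_trans (Polynomial.natDegree_sub_le _ _) (max_le (by simp) ?_)
      exact le_trans (Polynomial.natDegree_C_mul_le _ _) (by simp)
    have htop : P.coeff (m + 1) = 0 :=
      Polynomial.coeff_eq_zero_of_natDegree_lt (lt_of_le_of_lt hdeg (by omega))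
    -- rewrite RHS
    rw [show qCommIterRight q ζ a b (m + 1)
        = qComm (q * ζ ^ m) (qCommIterRight q ζ a b m) b from rfl, ih]
    unfold qComm
    rw [Finset.sum_mul, Finset.mul_sum, Finset.smul_sum]
    have h1 : ∀ i ∈ Finset.range (m + 1),
        (P.coeff i) • (b ^ i * a * b ^ (m - i)) * b
        = (P.coeff i) • (b ^ i * a * b ^ (m + 1 - i)) := by
      intro i hi
      rw [Finset.mem_range] at hi
      rw [smul_mul_assoc, mul_assoc, ← pow_succ]
      congr 3
      omega
    have h2 : ∀ i ∈ Finset.range (m + 1),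
        (q * ζ ^ m) • (b * ((P.coeff i) • (b ^ i * a * b ^ (m - i))))
        = ((q * ζ ^ m) * P.coeff i) • (b ^ (i + 1) * a * b ^ (m - i)) := by
      intro i _
      rw [mul_smul_comm, smul_smul]
      congr 1
      rw [← mul_assoc, ← mul_assoc, ← pow_succ']
    -- now expand target sum
    have hc : ∀ i, (∏ j ∈ Finset.range (m + 1),
        (1 - Polynomial.C (q * ζ ^ j) * Polynomial.X)).coeff i
        = P.coeff i - (q * ζ ^ m) * (P * Polynomial.X).coeff i := by
      intro i
      rw [hPm1, Polynomial.coeff_sub, Polynomial.coeff_C_mul]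
    rw [Finset.sum_congr rfl h1, Finset.sum_congr rfl h2]
    simp only [hc]
    have e1 : ∑ i ∈ Finset.range (m + 1), (P.coeff i) • (b ^ i * a * b ^ (m + 1 - i))
        = ∑ i ∈ Finset.range (m + 1 + 1), (P.coeff i) • (b ^ i * a * b ^ (m + 1 - i)) := by
      rw [Finset.sum_range_succ (fun i => P.coeff i • (b ^ i * a * b ^ (m + 1 - i))) (m + 1),
        htop, zero_smul, add_zero]
    have e2 : ∑ i ∈ Finset.range (m + 1),
          ((q * ζ ^ m) * P.coeff i) • (b ^ (i + 1) * a * b ^ (m - i))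
        = ∑ i ∈ Finset.range (m + 1 + 1),
          ((q * ζ ^ m) * (P * Polynomial.X).coeff i) • (b ^ i * a * b ^ (m + 1 - i)) := by
      conv_rhs => rw [Finset.sum_range_succ']
      simp only [Polynomial.coeff_mul_X, Polynomial.coeff_mul_X_zero, mul_zero, zero_smul,
        add_zero]
      refine Finset.sum_congr rfl fun i _ => ?_
      simp [Nat.succ_sub_succ]
    rw [e1, e2, ← Finset.sum_sub_distrib]
    exact Finset.sum_congr rfl fun i _ => (sub_smul _ _ _).symm

/-- The restricted `q`-Leibniz formula in characteristic `0`: if `ζ` has multiplicative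
order exactly `r`, then `[a, b^r]_{q^r} = [⋯[[a,b]_q, b]_{qζ} ⋯, b]_{qζ^{r-1}}`. -/
theorem qComm_pow_right_of_orderOf {k A : Type*} [Field k] [CharZero k]
    [Ring A] [Algebra k A] (a b : A) (q ζ : k) (r : ℕ) (hr : 1 ≤ r)
    (hζ : orderOf ζ = r) :
    qComm (q ^ r) a (b ^ r) = qCommIterRight q ζ a b r := by
  have hrpos : 0 < r := hr
  have hprim : IsPrimitiveRoot ζ r := hζ ▸ IsPrimitiveRoot.orderOf ζ
  rw [qCommIterRight_expand, prodC_aux hrpos hprim q]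
  have hcoeff : ∀ i, (1 - Polynomial.C (q ^ r) * Polynomial.X ^ r).coeff i
      = (if i = 0 then (1 : k) else 0) - (if i = r then q ^ r else 0) := by
    intro i
    rw [Polynomial.coeff_sub, Polynomial.coeff_one, Polynomial.coeff_C_mul,
      Polynomial.coeff_X_pow]
    split_ifs <;> simp
  have : ∀ i ∈ Finset.range (r + 1),
      ((1 - Polynomial.C (q ^ r) * Polynomial.X ^ r).coeff i) • (b ^ i * a * b ^ (r - i))
      = (if i = 0 then a * b ^ r else 0) + (if i = r then -((q ^ r) • (b ^ r * a)) else 0) := by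
    intro i hi
    rw [hcoeff, sub_smul]
    split_ifs with h0 h1 h2
    · omega
    · subst h0; simp
    · subst h2; simp [Nat.sub_self, neg_smul]
    · simp
  rw [Finset.sum_congr rfl this, Finset.sum_add_distrib, Finset.sum_ite_eq' _ 0,
    Finset.sum_ite_eq' _ r, if_pos (Finset.mem_range.2 (by omega)),
    if_pos (Finset.mem_range.2 (by omega))]
  simp [qComm, sub_eq_add_neg]
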